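/- Every finite point multiset in the hyperbolic plane has a centerpoint with balance 2/3: for every finite type V and map η : V → ℍ with n = card V, there exists a point p ∈ ℍ such that both open sides of every hyperbolic line through p each contain at most (2/3)·n of the points η v (with multiplicity). Concretely, there exists p ∈ ℍ such that: 3·#{v : Re(η v) < Re p} ≤ 2n and 3·#{v : Re(η v) > Re p} ≤ 2n, and for every real c: 3·#{v : |η v − c| < |p − c|} ≤ 2n and 3·#{v : |η v − c| > |p − c|} ≤ 2n. -/

import Mathlib

open scoped UpperHalfPlane

open Finset in
lemma planar_centerpoint {V : Type*} [Fintype V] [Nonempty V] (P : V → ℝ × ℝ) :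
    ∃ q ∈ convexHull ℝ (Set.range P),
      ∀ f : (ℝ × ℝ) →ₗ[ℝ] ℝ,
        3 * Nat.card {v : V // f (P v) < f q} ≤ 2 * Fintype.card V := by
  classical
  set n := Fintype.card V with hn
  have hn1 : 1 ≤ n := Fintype.card_pos
  set s : Finset (Finset V) := Finset.univ.filter (fun S => 2 * n < 3 * S.card) with hs
  have key : (⋂ S ∈ s, convexHull ℝ (P '' (S : Set V))).Nonempty := by
    apply Convex.helly_theorem' (𝕜 := ℝ)
    · intro S _; exact convex_convexHull _ _
    · intro I hIs hI
      have hfin : Module.finrank ℝ (ℝ × ℝ) = 2 := by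
        simp [Module.finrank_prod]
      rw [hfin] at hI
      have h1 : ∀ S ∈ I, 3 * Sᶜ.card ≤ n - 1 := by
        intro S hS
        have h2 := (Finset.mem_filter.1 (hIs hS)).2
        have h3 : S.card ≤ n := Finset.card_le_univ S
        rw [Finset.card_compl]
        omega
      have hbu : 3 * (I.biUnion fun S => Sᶜ).card < 3 * n := by
        calc 3 * (I.biUnion fun S => Sᶜ).card
            ≤ 3 * ∑ S ∈ I, Sᶜ.card := by
              exact Nat.mul_le_mul_left 3 (Finset.card_biUnion_le)
          _ = ∑ S ∈ I, 3 * Sᶜ.card := by rw [Finset.mul_sum]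
          _ ≤ ∑ S ∈ I, (n - 1) := Finset.sum_le_sum h1
          _ = I.card * (n - 1) := by rw [Finset.sum_const, smul_eq_mul]
          _ ≤ 3 * (n - 1) := Nat.mul_le_mul_right _ hI
          _ < 3 * n := by omega
      have hne : ((I.biUnion fun S => Sᶜ)ᶜ : Finset V).Nonempty := by
        apply Finset.card_pos.1
        rw [Finset.card_compl]
        have : (I.biUnion fun S => Sᶜ).card < n := by omega
        omega
      obtain ⟨v, hv⟩ := hne
      simp only [Finset.mem_compl, Finset.mem_biUnion, not_exists, not_and, not_not] at hv
      refine ⟨P v, ?_⟩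
      rw [Set.mem_iInter₂]
      intro S hS
      apply subset_convexHull
      refine ⟨v, ?_, rfl⟩
      exact hv S hS
  obtain ⟨q, hq⟩ := key
  rw [Set.mem_iInter₂] at hq
  have huniv : (Finset.univ : Finset V) ∈ s := by
    simp only [hs, Finset.mem_filter, Finset.mem_univ, true_and, Finset.card_univ]
    omega
  refine ⟨q, ?_, ?_⟩
  · have := hq Finset.univ huniv
    rwa [Finset.coe_univ, Set.image_univ] at this
  · intro f
    by_contra hcon
    push_neg at hcon
    set S : Finset V := Finset.univ.filter (fun v => f (P v) < f q) with hS
    have hcard : Nat.card {v : V // f (P v) < f q} = S.card := by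
      rw [Nat.card_eq_fintype_card, Fintype.card_subtype]
    rw [hcard] at hcon
    have hSs : S ∈ s := by
      simp only [hs, Finset.mem_filter, Finset.mem_univ, true_and]
      omega
    have hsub : convexHull ℝ (P '' (S : Set V)) ⊆ {w : ℝ × ℝ | f w < f q} := by
      apply convexHull_min
      · rintro _ ⟨v, hv, rfl⟩
        exact (Finset.mem_filter.1 hv).2
      · exact convex_halfSpace_lt f.isLinear _
    exact lt_irrefl (f q) (hsub (hq S hSs))

lemma parabola_convex : Convex ℝ {w : ℝ × ℝ | w.1 ^ 2 < w.2} := by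
  have h := (Even.convexOn_pow (even_two)).convex_strict_epigraph (𝕜 := ℝ)
  simpa using h

set_option maxHeartbeats 1000000 in
theorem stmt_13 {V : Type*} [Fintype V] (η : V → ℍ) :
    ∃ p : ℍ,
      3 * Nat.card {v : V // (η v).re < p.re} ≤ 2 * Fintype.card V ∧
      3 * Nat.card {v : V // p.re < (η v).re} ≤ 2 * Fintype.card V ∧
      ∀ c : ℝ,
        3 * Nat.card {v : V //
            ‖(η v : ℂ) - (c : ℂ)‖ < ‖(p : ℂ) - (c : ℂ)‖}
          ≤ 2 * Fintype.card V ∧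
        3 * Nat.card {v : V //
            ‖(p : ℂ) - (c : ℂ)‖ < ‖(η v : ℂ) - (c : ℂ)‖}
          ≤ 2 * Fintype.card V := by
  classical
  cases isEmpty_or_nonempty V with
  | inl h =>
    refine ⟨⟨Complex.I, by simp⟩, ?_, ?_, fun c => ⟨?_, ?_⟩⟩ <;>
      simp [Nat.card_of_isEmpty]
  | inr h =>
    set P : V → ℝ × ℝ := fun v => ((η v).re, (η v).re ^ 2 + (η v).im ^ 2) with hP
    obtain ⟨q, hq_mem, hq⟩ := planar_centerpoint P
    -- q is strictly above the parabola
    have hpar : q.1 ^ 2 < q.2 := by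
      have hsub : convexHull ℝ (Set.range P) ⊆ {w : ℝ × ℝ | w.1 ^ 2 < w.2} := by
        apply convexHull_min
        · rintro _ ⟨v, rfl⟩
          have := (η v).im_pos
          simp only [hP, Set.mem_setOf_eq]
          nlinarith
        · exact parabola_convex
      exact hsub hq_mem
    set a := q.1 with ha
    set b := q.2 with hb
    set t := Real.sqrt (b - a ^ 2) with htdef
    have ht : 0 < t := Real.sqrt_pos.2 (by linarith)
    have ht2 : t ^ 2 = b - a ^ 2 := Real.sq_sqrt (by linarith)
    set p : ℍ := ⟨⟨a, t⟩, ht⟩ with hp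
    have hpre : p.re = a := rfl
    have hpim : p.im = t := rfl
    have hcre : (p : ℂ).re = a := rfl
    have hcim : (p : ℂ).im = t := rfl
    refine ⟨p, ?_, ?_, fun c => ⟨?_, ?_⟩⟩
    · have h1 := hq (LinearMap.fst ℝ ℝ ℝ)
      have : Nat.card {v : V // (η v).re < p.re}
          = Nat.card {v : V // (LinearMap.fst ℝ ℝ ℝ) (P v) < (LinearMap.fst ℝ ℝ ℝ) q} := by
        apply Nat.card_congr
        apply Equiv.subtypeEquivRight
        intro v
        simp [hP, hpre, ha]
      omega
    · have h1 := hq (-(LinearMap.fst ℝ ℝ ℝ))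
      have : Nat.card {v : V // p.re < (η v).re}
          = Nat.card {v : V // (-(LinearMap.fst ℝ ℝ ℝ)) (P v) < (-(LinearMap.fst ℝ ℝ ℝ)) q} := by
        apply Nat.card_congr
        apply Equiv.subtypeEquivRight
        intro v
        simp [hP, hpre, ha]
      omega
    · have h1 := hq (LinearMap.snd ℝ ℝ ℝ - (2 * c) • LinearMap.fst ℝ ℝ ℝ)
      have : Nat.card {v : V //
            ‖(η v : ℂ) - (c : ℂ)‖ < ‖(p : ℂ) - (c : ℂ)‖}
          = Nat.card {v : V //
            (LinearMap.snd ℝ ℝ ℝ - (2 * c) • LinearMap.fst ℝ ℝ ℝ) (P v)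
              < (LinearMap.snd ℝ ℝ ℝ - (2 * c) • LinearMap.fst ℝ ℝ ℝ) q} := by
        apply Nat.card_congr
        apply Equiv.subtypeEquivRight
        intro v
        rw [Complex.norm_def, Complex.norm_def,
          Real.sqrt_lt_sqrt_iff (Complex.normSq_nonneg _)]
        simp only [Complex.normSq_apply, Complex.sub_re, Complex.sub_im,
          Complex.ofReal_re, Complex.ofReal_im, hcre, hcim,
          UpperHalfPlane.coe_re, UpperHalfPlane.coe_im,
          LinearMap.sub_apply, LinearMap.smul_apply, LinearMap.snd_apply,
          LinearMap.fst_apply, smul_eq_mul, hP, hpre, hpim, ha, hb, sub_zero]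
        constructor <;> intro hineq <;> nlinarith [ht2]
      omega
    · have h1 := hq (-(LinearMap.snd ℝ ℝ ℝ - (2 * c) • LinearMap.fst ℝ ℝ ℝ))
      have : Nat.card {v : V //
            ‖(p : ℂ) - (c : ℂ)‖ < ‖(η v : ℂ) - (c : ℂ)‖}
          = Nat.card {v : V //
            (-(LinearMap.snd ℝ ℝ ℝ - (2 * c) • LinearMap.fst ℝ ℝ ℝ)) (P v)
              < (-(LinearMap.snd ℝ ℝ ℝ - (2 * c) • LinearMap.fst ℝ ℝ ℝ)) q} := by
        apply Nat.card_congr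
        apply Equiv.subtypeEquivRight
        intro v
        rw [Complex.norm_def, Complex.norm_def,
          Real.sqrt_lt_sqrt_iff (Complex.normSq_nonneg _)]
        simp only [Complex.normSq_apply, Complex.sub_re, Complex.sub_im,
          Complex.ofReal_re, Complex.ofReal_im, hcre, hcim,
          UpperHalfPlane.coe_re, UpperHalfPlane.coe_im,
          LinearMap.neg_apply, LinearMap.sub_apply, LinearMap.smul_apply,
          LinearMap.snd_apply, LinearMap.fst_apply, smul_eq_mul, hP, hpre, hpim, ha, hb, sub_zero]
        constructor <;> intro hineq <;> nlinarith [ht2]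
      omega
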